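/- Let p be a prime, e ≥ 1, r : {1,…,e} → ℕ nonincreasing with r_e ≥ 1, and let 0 ≤ f ≤ e be minimal such that r_i = 1 for all i > f (i.e. p^f G is cyclic). With ε(l) defined as before, ε(l) = 0 if and only if p^f divides l, for 2 ≤ l ≤ p^e. -/

import Mathlib

/-- `w p i m = ⌊(m-1)/p^(i-1)⌋ - ⌊(m-1)/p^i⌋` (natural floor division). -/
def w (p i m : ℕ) : ℕ := (m - 1) / p ^ (i - 1) - (m - 1) / p ^ i

lemma aux_div {p : ℕ} (hp : 2 ≤ p) {j e : ℕ} (hje : j ≤ e) :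
    (p ^ e - 1) / p ^ j = p ^ (e - j) - 1 := by
  have h1 : 0 < p ^ j := Nat.pow_pos (by omega)
  have h2 : 0 < p ^ (e - j) := Nat.pow_pos (by omega)
  have h3 : p ^ j * p ^ (e - j) = p ^ e := by rw [← pow_add]; congr 1; omega
  have h5 : p ^ j * (p ^ (e - j) - 1) = p ^ j * p ^ (e - j) - p ^ j := by
    rw [Nat.mul_sub, Nat.mul_one]
  have h6 : p ^ j ≤ p ^ j * p ^ (e - j) := Nat.le_mul_of_pos_right _ h2
  have h4 : p ^ e - 1 = p ^ j * (p ^ (e - j) - 1) + (p ^ j - 1) := by omega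
  rw [h4, Nat.mul_add_div h1, Nat.div_eq_of_lt (by omega), Nat.add_zero]

lemma w_pe {p : ℕ} (hp : 2 ≤ p) {i e : ℕ} (h1 : 1 ≤ i) (h2 : i ≤ e) :
    (w p i (p ^ e) : ℚ) = ((p : ℚ) - 1) * (p : ℚ) ^ (e - i) := by
  unfold w
  rw [aux_div hp (by omega : i - 1 ≤ e), aux_div hp h2]
  have h3 : e - (i - 1) = (e - i) + 1 := by omega
  rw [h3, pow_succ]
  have h4 : 1 ≤ p ^ (e - i) := Nat.one_le_pow _ _ (by omega)
  have h5 : p ^ (e - i) ≤ p ^ (e - i) * p := Nat.le_mul_of_pos_right _ (by omega)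
  have h6 : p ^ (e - i) * p - 1 - (p ^ (e - i) - 1) = p ^ (e - i) * p - p ^ (e - i) := by
    omega
  rw [h6, Nat.cast_sub h5]
  push_cast
  ring

noncomputable def T' (p e l i : ℕ) : ℚ :=
  (p : ℚ) ^ e - (1 + (((l - 1) % p ^ i : ℕ) : ℚ)) * (p : ℚ) ^ (e - i)

noncomputable def rho (r : ℕ → ℕ) (f i : ℕ) : ℚ := if f < i then 1 else r i

lemma T'_zero (p e l : ℕ) : T' p e l 0 = 0 := by
  simp [T', Nat.mod_one]

lemma T'_e {p e l : ℕ} (hl2 : 2 ≤ l) (hle : l ≤ p ^ e) : T' p e l e = (p : ℚ) ^ e - l := by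
  have h1 : l - 1 < p ^ e := by omega
  have : ((l - 1 : ℕ) : ℚ) = (l : ℚ) - 1 := by
    have : (1:ℕ) ≤ l := by omega
    push_cast [Nat.cast_sub this]; ring
  simp [T', Nat.mod_eq_of_lt h1, this]

lemma T'_nonneg {p : ℕ} (hp : 2 ≤ p) {e l i : ℕ} (hi : i ≤ e) : 0 ≤ T' p e l i := by
  have h1 : (l - 1) % p ^ i < p ^ i := Nat.mod_lt _ (Nat.pow_pos (by omega))
  have h2 : (1 + (((l - 1) % p ^ i : ℕ) : ℚ)) ≤ (p : ℚ) ^ i := by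
    have h0 : ((l - 1) % p ^ i + 1 : ℕ) ≤ p ^ i := h1
    calc (1 + (((l - 1) % p ^ i : ℕ) : ℚ)) = (((l - 1) % p ^ i + 1 : ℕ) : ℚ) := by
          push_cast; ring
      _ ≤ ((p ^ i : ℕ) : ℚ) := by exact_mod_cast h0
      _ = (p : ℚ) ^ i := by push_cast; ring
  have h3 : (0:ℚ) ≤ (p:ℚ) ^ (e - i) := by positivity
  have h4 : (1 + (((l - 1) % p ^ i : ℕ) : ℚ)) * (p : ℚ) ^ (e - i)
      ≤ (p:ℚ) ^ i * (p:ℚ) ^ (e - i) := mul_le_mul_of_nonneg_right h2 h3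
  have h5 : (p:ℚ) ^ i * (p:ℚ) ^ (e - i) = (p:ℚ) ^ e := by
    rw [← pow_add]; congr 1; omega
  simp only [T']
  linarith [h4, h5.le]

lemma per_term {p : ℕ} (hp : 2 ≤ p) {e l i : ℕ} (h1 : 1 ≤ i) (h2 : i ≤ e) (hl : 2 ≤ l) :
    (w p i l : ℚ) * (p : ℚ) ^ e - ((p : ℚ) - 1) * (p : ℚ) ^ (e - i) * l
      = T' p e l (i - 1) - T' p e l i := by
  obtain ⟨j, rfl⟩ : ∃ j, i = j + 1 := ⟨i - 1, by omega⟩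
  simp only [Nat.add_sub_cancel]
  set q1 := (l - 1) / p ^ j with hq1def
  set q2 := (l - 1) / p ^ (j + 1) with hq2def
  have hple : p ^ j ≤ p ^ (j + 1) := Nat.pow_le_pow_right (by omega) (by omega)
  have hppos : 0 < p ^ j := Nat.pow_pos (by omega)
  have hle : q2 ≤ q1 := Nat.div_le_div_left hple hppos
  have hw : (w p (j + 1) l : ℚ) = (q1 : ℚ) - q2 := by
    unfold w
    simp only [Nat.add_sub_cancel]
    rw [Nat.cast_sub hle]
  have hcl : ((l - 1 : ℕ) : ℚ) = (l : ℚ) - 1 := by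
    have : (1:ℕ) ≤ l := by omega
    push_cast [Nat.cast_sub this]; ring
  have hA : (p : ℚ) ^ j * q1 + (((l - 1) % p ^ j : ℕ) : ℚ) = (l : ℚ) - 1 := by
    have hdm := Nat.div_add_mod (l - 1) (p ^ j)
    calc (p : ℚ) ^ j * q1 + (((l - 1) % p ^ j : ℕ) : ℚ)
        = ((p ^ j * q1 + (l - 1) % p ^ j : ℕ) : ℚ) := by push_cast; ring
      _ = ((l - 1 : ℕ) : ℚ) := by rw [hdm]
      _ = (l : ℚ) - 1 := hcl
  have hB : (p : ℚ) ^ (j+1) * q2 + (((l - 1) % p ^ (j+1) : ℕ) : ℚ) = (l : ℚ) - 1 := by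
    have hdm := Nat.div_add_mod (l - 1) (p ^ (j+1))
    calc (p : ℚ) ^ (j+1) * q2 + (((l - 1) % p ^ (j+1) : ℕ) : ℚ)
        = ((p ^ (j+1) * q2 + (l - 1) % p ^ (j+1) : ℕ) : ℚ) := by push_cast; ring
      _ = ((l - 1 : ℕ) : ℚ) := by rw [hdm]
      _ = (l : ℚ) - 1 := hcl
  have hC : (p : ℚ) ^ (e - j) * (p : ℚ) ^ j = (p : ℚ) ^ e := by
    rw [← pow_add]; congr 1; omega
  have hD : (p : ℚ) ^ (e - (j+1)) * (p : ℚ) ^ (j+1) = (p : ℚ) ^ e := by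
    rw [← pow_add]; congr 1; omega
  have hE : (p : ℚ) ^ (e - j) = (p : ℚ) * (p : ℚ) ^ (e - (j+1)) := by
    rw [← pow_succ']; congr 1; omega
  have hh1 : (q1 : ℚ) * (p : ℚ) ^ e
      = ((l : ℚ) - 1 - (((l - 1) % p ^ j : ℕ) : ℚ)) * (p : ℚ) ^ (e - j) := by
    linear_combination (p : ℚ) ^ (e - j) * hA - (q1 : ℚ) * hC
  have hh2 : (q2 : ℚ) * (p : ℚ) ^ e
      = ((l : ℚ) - 1 - (((l - 1) % p ^ (j+1) : ℕ) : ℚ)) * (p : ℚ) ^ (e - (j+1)) := by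
    linear_combination (p : ℚ) ^ (e - (j+1)) * hB - (q2 : ℚ) * hD
  simp only [T', hw]
  rw [hE] at hh1 ⊢
  have hps : (p : ℚ) ^ (j + 1) = (p:ℚ) * (p:ℚ) ^ j := by ring
  linear_combination hh1 - hh2

lemma telescope (p e l f : ℕ) (r : ℕ → ℕ) :
    ∑ i ∈ Finset.Icc 1 e, rho r f i * (T' p e l i - T' p e l (i - 1))
      = ∑ i ∈ Finset.Icc 1 e, (rho r f i - rho r f (i + 1)) * T' p e l i
        + (rho r f (e + 1) * T' p e l e - rho r f 1 * T' p e l 0) := by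
  have key : ∑ i ∈ Finset.Icc 1 e,
      (rho r f (i + 1) * T' p e l i - rho r f i * T' p e l (i - 1))
      = rho r f (e + 1) * T' p e l e - rho r f 1 * T' p e l 0 := by
    rw [← Finset.Ico_add_one_right_eq_Icc, Finset.sum_Ico_eq_sum_range]
    have h1 : e + 1 - 1 = e := by omega
    rw [h1]
    have h2 : ∀ i ∈ Finset.range e,
        (rho r f (1 + i + 1) * T' p e l (1 + i) - rho r f (1 + i) * T' p e l (1 + i - 1))
        = (fun k => rho r f (k + 1) * T' p e l k) (i + 1)
          - (fun k => rho r f (k + 1) * T' p e l k) i := by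
      intro i _
      have h3 : 1 + i = i + 1 := Nat.add_comm 1 i
      rw [h3]
      simp only [Nat.add_sub_cancel]
    rw [Finset.sum_congr rfl h2]
    exact Finset.sum_range_sub (fun k => rho r f (k + 1) * T' p e l k) e
  calc ∑ i ∈ Finset.Icc 1 e, rho r f i * (T' p e l i - T' p e l (i - 1))
      = ∑ i ∈ Finset.Icc 1 e, ((rho r f i - rho r f (i + 1)) * T' p e l i
        + (rho r f (i + 1) * T' p e l i - rho r f i * T' p e l (i - 1))) :=
        Finset.sum_congr rfl (fun i _ => by ring)
    _ = ∑ i ∈ Finset.Icc 1 e, (rho r f i - rho r f (i + 1)) * T' p e l i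
        + ∑ i ∈ Finset.Icc 1 e, (rho r f (i + 1) * T' p e l i - rho r f i * T' p e l (i - 1)) :=
        Finset.sum_add_distrib
    _ = _ := by rw [key]

theorem stmt5 (p e f : ℕ) (hp : p.Prime) (he : 1 ≤ e) (r : ℕ → ℕ)
    (hmono : ∀ i, 1 ≤ i → i < e → r (i + 1) ≤ r i)
    (hre : 1 ≤ r e) (hfe : f ≤ e)
    (hcyc : ∀ i, f < i → i ≤ e → r i = 1)
    (hmin : f = 0 ∨ 1 < r f) :
    ∀ l, 2 ≤ l → l ≤ p ^ e →
      ((1 + ∑ i ∈ Finset.Icc 1 e, (r i : ℚ) * (w p i (p ^ e) : ℚ)) / (p : ℚ) ^ e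
        - (1 + ∑ i ∈ Finset.Icc 1 e, (r i : ℚ) * (w p i l : ℚ)) / (l : ℚ) = 0
      ↔ p ^ f ∣ l) := by
  intro l hl2 hle
  have hp2 : 2 ≤ p := hp.two_le
  have hl0 : (l : ℚ) ≠ 0 := by
    have : (0:ℚ) < l := by exact_mod_cast (by omega : 0 < l)
    exact ne_of_gt this
  have hpq : (p : ℚ) ≠ 0 := by
    have : (0:ℚ) < p := by exact_mod_cast (by omega : 0 < p)
    exact ne_of_gt this
  have hpe : ((p:ℚ) ^ e) ≠ 0 := pow_ne_zero _ hpq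
  rw [div_sub_div _ _ hpe hl0, div_eq_zero_iff, or_iff_left (mul_ne_zero hpe hl0)]
  have master : (1 + ∑ i ∈ Finset.Icc 1 e, (r i : ℚ) * (w p i (p ^ e) : ℚ)) * l
      - (p:ℚ) ^ e * (1 + ∑ i ∈ Finset.Icc 1 e, (r i : ℚ) * (w p i l : ℚ))
      = ∑ i ∈ Finset.Icc 1 e, (rho r f i - rho r f (i + 1)) * T' p e l i := by
    have step1 : (1 + ∑ i ∈ Finset.Icc 1 e, (r i : ℚ) * (w p i (p ^ e) : ℚ)) * l
        - (p:ℚ) ^ e * (1 + ∑ i ∈ Finset.Icc 1 e, (r i : ℚ) * (w p i l : ℚ))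
        = ((l:ℚ) - (p:ℚ) ^ e) + ∑ i ∈ Finset.Icc 1 e,
            ((r i : ℚ) * (w p i (p ^ e) : ℚ) * l - (p:ℚ) ^ e * ((r i : ℚ) * (w p i l : ℚ))) := by
      rw [Finset.sum_sub_distrib, ← Finset.sum_mul, ← Finset.mul_sum]
      ring
    have step2 : ∀ i ∈ Finset.Icc 1 e,
        (r i : ℚ) * (w p i (p ^ e) : ℚ) * l - (p:ℚ) ^ e * ((r i : ℚ) * (w p i l : ℚ))
        = rho r f i * (T' p e l i - T' p e l (i - 1)) := by
      intro i hi
      simp only [Finset.mem_Icc] at hi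
      have hrho : rho r f i = (r i : ℚ) := by
        unfold rho
        split_ifs with h
        · rw [hcyc i h hi.2]; norm_num
        · rfl
      rw [hrho, w_pe hp2 hi.1 hi.2]
      have hpt := per_term hp2 hi.1 hi.2 hl2
      linear_combination (-(r i : ℚ)) * hpt
    rw [step1, Finset.sum_congr rfl step2, telescope]
    have h0 : T' p e l 0 = 0 := T'_zero p e l
    have hee : T' p e l e = (p:ℚ) ^ e - l := T'_e hl2 hle
    have hr1 : rho r f (e + 1) = 1 := by unfold rho; rw [if_pos (by omega)]
    rw [h0, hee, hr1]
    ring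
  rw [master]
  have hnn : ∀ i ∈ Finset.Icc 1 e, 0 ≤ (rho r f i - rho r f (i + 1)) * T' p e l i := by
    intro i hi
    simp only [Finset.mem_Icc] at hi
    apply mul_nonneg _ (T'_nonneg hp2 hi.2)
    rw [sub_nonneg]
    unfold rho
    rcases lt_trichotomy i f with h | h | h
    · rw [if_neg (by omega), if_neg (by omega)]
      exact_mod_cast hmono i hi.1 (by omega)
    · subst h
      rw [if_pos (by omega), if_neg (by omega)]
      have hrf : 1 < r i := hmin.resolve_left (by omega)
      exact_mod_cast hrf.le
    · rw [if_pos (by omega), if_pos (by omega)]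
  rw [Finset.sum_eq_zero_iff_of_nonneg hnn]
  constructor
  · intro h
    rcases Nat.eq_zero_or_pos f with hf0 | hf1
    · simp [hf0]
    · have hfmem : f ∈ Finset.Icc 1 e := Finset.mem_Icc.mpr ⟨hf1, hfe⟩
      have hterm := h f hfmem
      have hrf : 1 < r f := hmin.resolve_left (by omega)
      have hρ : rho r f f - rho r f (f + 1) = (r f : ℚ) - 1 := by
        unfold rho; rw [if_neg (lt_irrefl f), if_pos (by omega)]
      rw [hρ] at hterm
      have hne : (r f : ℚ) - 1 ≠ 0 := by
        have : (1:ℚ) < r f := by exact_mod_cast hrf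
        exact sub_ne_zero.mpr (ne_of_gt this)
      have hT : T' p e l f = 0 := (mul_eq_zero.mp hterm).resolve_left hne
      have hpef : (p:ℚ) ^ f * (p:ℚ) ^ (e - f) = (p:ℚ) ^ e := by
        rw [← pow_add]; congr 1; omega
      have hne2 : (p:ℚ) ^ (e - f) ≠ 0 := pow_ne_zero _ hpq
      have hcancel : (1 + (((l - 1) % p ^ f : ℕ) : ℚ)) = (p:ℚ) ^ f := by
        apply mul_right_cancel₀ hne2
        unfold T' at hT
        linarith [hpef]
      have hnat : (l - 1) % p ^ f + 1 = p ^ f := by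
        have : (((l - 1) % p ^ f + 1 : ℕ) : ℚ) = ((p ^ f : ℕ) : ℚ) := by
          push_cast
          linarith [hcancel]
        exact_mod_cast this
      have hdm := Nat.div_add_mod (l - 1) (p ^ f)
      refine ⟨(l - 1) / p ^ f + 1, ?_⟩
      have hmm : p ^ f * ((l - 1) / p ^ f + 1) = p ^ f * ((l - 1) / p ^ f) + p ^ f := by ring
      omega
  · rintro ⟨k, hk⟩ i hi
    simp only [Finset.mem_Icc] at hi
    by_cases hif : i ≤ f
    · have hdvd : p ^ i ∣ l := dvd_trans (pow_dvd_pow p hif) ⟨k, hk⟩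
      obtain ⟨k', hk'⟩ := hdvd
      have hppos : 0 < p ^ i := Nat.pow_pos (by omega)
      have hk1 : 1 ≤ k' := by
        rcases Nat.eq_zero_or_pos k' with h0 | h1
        · rw [h0, Nat.mul_zero] at hk'; omega
        · exact h1
      have hmul : p ^ i * (k' - 1) = p ^ i * k' - p ^ i := by
        rw [Nat.mul_sub, Nat.mul_one]
      have hle2 : p ^ i ≤ p ^ i * k' := Nat.le_mul_of_pos_right _ hk1
      have hrewrite : l - 1 = p ^ i * (k' - 1) + (p ^ i - 1) := by omega
      have hs : (l - 1) % p ^ i = p ^ i - 1 := by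
        rw [hrewrite, Nat.mul_add_mod, Nat.mod_eq_of_lt (by omega)]
      have hT0 : T' p e l i = 0 := by
        unfold T'
        rw [hs]
        have h1 : (1:ℕ) ≤ p ^ i := hppos
        have hc : (1 + (((p ^ i - 1 : ℕ)) : ℚ)) = (p:ℚ) ^ i := by
          push_cast [Nat.cast_sub h1]; ring
        rw [hc, ← pow_add]
        have : i + (e - i) = e := by omega
        rw [this, sub_self]
      rw [hT0, mul_zero]
    · have hz : rho r f i - rho r f (i + 1) = 0 := by
        unfold rho; rw [if_pos (by omega), if_pos (by omega)]; ring
      rw [hz, zero_mul]
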